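/- Fix positive integers r, l with r ≥ 2l, let n ≥ 2 and set ρ = n(r-l). Let D⁽³⁾ be an integer auxiliary matrix of type (n,r,0)_{r,l} and let D⁽²⁾ be any integer matrix of format l×(2ρ+l). Then there is a constant C = C(l) such that for all positive integers P one has J_n(P) ≤ C·P^{8l}·I(P, D⁽³⁾), where J_n(P) is formed from the pair (D⁽³⁾, D⁽²⁾). -/

import Mathlib

open MeasureTheory

noncomputable section

/-- `e(θ) = exp(2πiθ)`. -/
def eF (θ : ℝ) : ℂ := Complex.exp (2 * Real.pi * Complex.I * θ)

/-- The cubic Weyl sum `g(η) = Σ_{x=-P}^{P} e(ηx³)`. -/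
def gS (P : ℕ) (η : ℝ) : ℂ := ∑ x ∈ Finset.Icc (-(P : ℤ)) (P : ℤ), eF (η * (x : ℝ) ^ 3)

/-- The unit cube `[0,1]^k`. -/
def unitCube (k : ℕ) : Set (Fin k → ℝ) := Set.univ.pi fun _ => Set.Icc (0 : ℝ) 1

/-- A matrix is *totally non-singular* if every minor of every size is non-zero. -/
def TotallyNonSingular {a b : ℕ} (A : Matrix (Fin a) (Fin b) ℤ) : Prop :=
  ∀ (k : ℕ) (ri : Fin k → Fin a) (ci : Fin k → Fin b),
    Function.Injective ri → Function.Injective ci → (A.submatrix ri ci).det ≠ 0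

/-- The entry of `D` at natural-number indices `(i, j)`, defaulting to `0` out of range. -/
def entryZ {R S : ℕ} (D : Matrix (Fin R) (Fin S) ℤ) (i j : ℕ) : ℤ :=
  if h : i < R ∧ j < S then D ⟨i, h.1⟩ ⟨j, h.2⟩ else 0

/-- First row (0-indexed) of the `k`-th block (`1 ≤ k ≤ n`) of the linked-block part. -/
def auxRowStart (r l t : ℕ) (k : ℕ) : ℕ := if k = 1 then 0 else (t - l) + (k - 2) * (r - l)

/-- Number of rows of the `k`-th block. -/
def auxNumRows (r t : ℕ) (k : ℕ) : ℕ := if k = 1 then t else r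

/-- First column (0-indexed, within `V`) of the `k`-th block. -/
def auxColStart (r l t ω : ℕ) (k : ℕ) : ℕ :=
  if k = 1 then 0 else (t - l + ω) + (k - 2) * (r - l)

/-- Number of columns of the `k`-th block. -/
def auxNumCols (r l t ω : ℕ) (k : ℕ) : ℕ := if k = 1 then t - l + ω else r - l

/-- `D` is an *auxiliary matrix of type `(n,t,ω)_{r,l}`*:  it has format `R × S` with
`R = (n-1)(r-l)+t`, `S = 2R-l+ω`, its left `R × R` part is a non-singular diagonal matrix
`U`, and its right `R × (R-l+ω)` part `V` vanishes outside `n` totally non-singular blocks,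
the first of format `t × (t-l+ω)` in the top left corner, the subsequent ones of format
`r × (r-l)`, placed diagonally so that consecutive blocks overlap in exactly `l` rows. -/
def IsAuxiliary (r l n t ω : ℕ) {R S : ℕ} (D : Matrix (Fin R) (Fin S) ℤ) : Prop :=
  R = (n - 1) * (r - l) + t ∧ S = 2 * R - l + ω ∧
  (∀ i j : ℕ, i < R → j < R → i ≠ j → entryZ D i j = 0) ∧
  (∀ i : ℕ, i < R → entryZ D i i ≠ 0) ∧
  (∀ i j : ℕ, i < R → j < R - l + ω →
    (¬ ∃ k : ℕ, 1 ≤ k ∧ k ≤ n ∧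
        auxRowStart r l t k ≤ i ∧ i < auxRowStart r l t k + auxNumRows r t k ∧
        auxColStart r l t ω k ≤ j ∧ j < auxColStart r l t ω k + auxNumCols r l t ω k) →
    entryZ D i (R + j) = 0) ∧
  (∀ k : ℕ, 1 ≤ k → k ≤ n →
    TotallyNonSingular (Matrix.of
      fun (i : Fin (auxNumRows r t k)) (j : Fin (auxNumCols r l t ω k)) =>
        entryZ D (auxRowStart r l t k + (i : ℕ)) (R + (auxColStart r l t ω k + (j : ℕ)))))

/-- The mean value `I(P,D) = ∫_{[0,1]^R} ∏_{i=1}^{R} |g(θ_i)|² ∏_{i=R+1}^{S} |g(θ_i)|⁴ dη`,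
where `θ_j(η) = Σ_{i=1}^{R} d_{i,j} η_i`. -/
def IInt (P : ℕ) {R S : ℕ} (D : Matrix (Fin R) (Fin S) ℤ) : ℝ :=
  ∫ η in unitCube R,
    ∏ j : Fin S,
      ‖gS P (∑ i : Fin R, (D i j : ℝ) * η i)‖ ^ (if (j : ℕ) < R then 2 else 4)

/-- `I_{n,t}^{ω}(P)`: the supremum of `I(P,D)` over all integer auxiliary matrices `D`
of type `(n,t,ω)_{r,l}`. -/
def Isup (r l n t ω P : ℕ) : ℝ :=
  sSup {x : ℝ | ∃ (R S : ℕ) (D : Matrix (Fin R) (Fin S) ℤ),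
    IsAuxiliary r l n t ω D ∧ x = IInt P D}


/-- An `a × b` integer matrix (with `b ≥ a`) is *highly non-singular* if every `a × a`
submatrix formed by choosing `a` of its columns is non-singular. -/
def HighlyNonSingular {a b : ℕ} (A : Matrix (Fin a) (Fin b) ℤ) : Prop :=
  ∀ c : Fin a → Fin b, Function.Injective c → (A.submatrix id c).det ≠ 0

/-- The Weyl sum `f(α,β) = Σ_{x=-P}^{P} e(αx³ + βx²)`. -/
def fS (P : ℕ) (α β : ℝ) : ℂ :=
  ∑ x ∈ Finset.Icc (-(P : ℤ)) (P : ℤ), eF (α * (x : ℝ) ^ 3 + β * (x : ℝ) ^ 2)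

/-- The mean value `∫_{[0,1]^{a+l}} ∏_j |f(γ_{3,j}, γ_{2,j})|^{exps j} dα`, where
`γ_{3,j} = Σ_i d⁽³⁾_{i,j} α_{3,i}` and `γ_{2,j} = Σ_i d⁽²⁾_{i,j} α_{2,i}`. -/
def JInt (P : ℕ) {a l b : ℕ} (D3 : Matrix (Fin a) (Fin b) ℤ) (D2 : Matrix (Fin l) (Fin b) ℤ)
    (exps : ℕ → ℕ) : ℝ :=
  ∫ α3 in unitCube a, ∫ α2 in unitCube l,
    ∏ j : Fin b,
      ‖fS P (∑ i : Fin a, (D3 i j : ℝ) * α3 i) (∑ i : Fin l, (D2 i j : ℝ) * α2 i)‖ ^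
        exps (j : ℕ)

/-- The exponent pattern of the mean value `J_n(P)` (with `ρ = n(r-l)`, `0`-indexed):
for `n = 1` the exponents are `2` on the first `r` columns, `12` on the next `l`, and `4`
on the remaining ones; for `n ≥ 2` they are `2` on the first `ρ+l` columns, `8` on the
next `l`, `4` up to column `2ρ`, and `8` on the final `l` columns. -/
def Jexp (r l n : ℕ) (j : ℕ) : ℕ :=
  if n = 1 then (if j < r then 2 else if j < r + l then 12 else 4)
  else (if j < n * (r - l) + l then 2 else if j < n * (r - l) + 2 * l then 8
    else if j < 2 * (n * (r - l)) then 4 else 8)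

/-- Look up the `m`-th coordinate of a vector indexed by `Fin k`, defaulting to `0`. -/
def flookup {k : ℕ} (v : Fin k → ℝ) (m : ℕ) : ℝ := if h : m < k then v ⟨m, h⟩ else 0

end


/- ===================== auxiliary machinery ===================== -/

open MeasureTheory

section EFBasics

lemma continuous_eF : Continuous eF := by
  unfold eF; fun_prop

lemma eF_zero : eF 0 = 1 := by simp [eF]

lemma eF_add (a b : ℝ) : eF (a + b) = eF a * eF b := by
  rw [eF, eF, eF, ← Complex.exp_add]; congr 1; push_cast; ring

lemma conj_eF (a : ℝ) : (starRingEnd ℂ) (eF a) = eF (-a) := by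
  rw [eF, eF, ← Complex.exp_conj]
  congr 1
  simp only [map_mul, Complex.conj_I, Complex.conj_ofReal, map_ofNat]
  push_cast
  ring

lemma norm_eF (a : ℝ) : ‖eF a‖ = 1 := by
  have h : (2 * (Real.pi : ℂ) * Complex.I * (a : ℂ))
      = ((2 * Real.pi * a : ℝ) : ℂ) * Complex.I := by push_cast; ring
  rw [eF, h, Complex.norm_exp_ofReal_mul_I]

lemma eF_sum {ι : Type*} (s : Finset ι) (f : ι → ℝ) :
    eF (∑ i ∈ s, f i) = ∏ i ∈ s, eF (f i) := by
  classical
  induction s using Finset.cons_induction with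
  | empty => simp [eF_zero]
  | cons a s ha ih => rw [Finset.sum_cons, Finset.prod_cons, eF_add, ih]

lemma eF_int (k : ℤ) : eF (k : ℝ) = 1 := by
  rw [eF, show (2 * (Real.pi : ℂ) * Complex.I * ((k : ℝ) : ℂ))
      = (k : ℂ) * (2 * (Real.pi : ℂ) * Complex.I) from by push_cast; ring,
    Complex.exp_int_mul_two_pi_mul_I]

lemma integral_eF_Icc (K : ℤ) :
    ∫ t in Set.Icc (0:ℝ) 1, eF (t * K) = if K = 0 then 1 else 0 := by
  rw [show (volume : Measure ℝ).restrict (Set.Icc (0:ℝ) 1)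
      = (volume : Measure ℝ).restrict (Set.Ioc (0:ℝ) 1) from
    (Measure.restrict_congr_set Ioc_ae_eq_Icc).symm]
  rw [← intervalIntegral.integral_of_le (by norm_num : (0:ℝ) ≤ 1)]
  by_cases hK : K = 0
  · simp [hK, eF_zero]
  · simp only [hK, if_false]
    have hc : (2 * (Real.pi : ℂ) * Complex.I * (K : ℂ)) ≠ 0 := by
      apply mul_ne_zero
      apply mul_ne_zero
      · simp [Real.pi_ne_zero]
      · exact Complex.I_ne_zero
      · exact_mod_cast hK
    have h : ∀ t : ℝ, eF (t * K) = Complex.exp ((2 * (Real.pi : ℂ) * Complex.I * (K : ℂ)) * t) := by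
      intro t; rw [eF]; congr 1; push_cast; ring
    simp_rw [h]
    rw [integral_exp_mul_complex hc]
    simp only [Complex.ofReal_one, Complex.ofReal_zero, mul_one, mul_zero]
    rw [Complex.exp_zero,
      show (2 * (Real.pi : ℂ) * Complex.I * (K : ℂ))
        = (K : ℂ) * (2 * (Real.pi : ℂ) * Complex.I) from by ring,
      Complex.exp_int_mul_two_pi_mul_I, sub_self, zero_div]

end EFBasics

section Cube

lemma measurableSet_unitCube (k : ℕ) : MeasurableSet (unitCube k) :=
  MeasurableSet.univ_pi fun _ => measurableSet_Icc

lemma isCompact_unitCube (k : ℕ) : IsCompact (unitCube k) :=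
  isCompact_univ_pi fun _ => isCompact_Icc

lemma volume_unitCube (k : ℕ) : volume (unitCube k) = 1 := by
  rw [unitCube, volume_pi_pi]
  simp [Real.volume_Icc]

lemma isFiniteMeasure_cube (k : ℕ) :
    IsFiniteMeasure ((volume : Measure (Fin k → ℝ)).restrict (unitCube k)) := by
  constructor
  rw [Measure.restrict_apply_univ, volume_unitCube]
  exact ENNReal.one_lt_top

lemma integrableOn_cube {k : ℕ} {E : Type*} [NormedAddCommGroup E]
    {f : (Fin k → ℝ) → E} (hf : Continuous f) :
    IntegrableOn f (unitCube k) :=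
  ContinuousOn.integrableOn_compact (isCompact_unitCube k) hf.continuousOn

lemma integral_cube_prod {k : ℕ} (f : Fin k → ℝ → ℂ) :
    ∫ η in unitCube k, ∏ i, f i (η i) = ∏ i, ∫ t in Set.Icc (0:ℝ) 1, f i t := by
  rw [← MeasureTheory.integral_indicator (measurableSet_unitCube k)]
  have h : ∀ η : Fin k → ℝ, (unitCube k).indicator (fun η => ∏ i, f i (η i)) η
      = ∏ i, (Set.Icc (0:ℝ) 1).indicator (f i) (η i) := by
    intro η
    by_cases hη : η ∈ unitCube k
    · rw [Set.indicator_of_mem hη]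
      refine Finset.prod_congr rfl fun i _ => (Set.indicator_of_mem ?_ _).symm
      exact hη i (Set.mem_univ i)
    · rw [Set.indicator_of_notMem hη]
      have hex : ∃ i, η i ∉ Set.Icc (0:ℝ) 1 := by
        by_contra hc
        push_neg at hc
        exact hη fun i _ => hc i
      obtain ⟨i, hi⟩ := hex
      exact (Finset.prod_eq_zero (Finset.mem_univ i) (Set.indicator_of_notMem hi _)).symm
  simp_rw [h]
  rw [MeasureTheory.integral_fintype_prod_volume_eq_prod
    (f := fun i => (Set.Icc (0:ℝ) 1).indicator (f i))]
  exact Finset.prod_congr rfl fun i _ =>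
    MeasureTheory.integral_indicator measurableSet_Icc

lemma integral_cube_eF {k : ℕ} (K : Fin k → ℤ) :
    ∫ η in unitCube k, eF (∑ i, η i * (K i : ℝ))
      = ∏ i, (if K i = 0 then (1:ℂ) else 0) := by
  simp_rw [eF_sum]
  rw [integral_cube_prod (fun i t => eF (t * (K i : ℝ)))]
  exact Finset.prod_congr rfl fun i _ => integral_eF_Icc (K i)

end Cube

section KeyLemma

/-- The index box `[-P,P]²`. -/
noncomputable def box (P : ℕ) : Finset (ℤ × ℤ) := Finset.Icc (-(P:ℤ)) P ×ˢ Finset.Icc (-(P:ℤ)) P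

/-- Cubic coefficient attached to a tuple of solutions. -/
def cub {R S : ℕ} (D : Matrix (Fin R) (Fin S) ℤ) (m : Fin S → ℕ)
    (T : ((j : Fin S) × Fin (m j)) → ℤ × ℤ) (i' : Fin R) : ℤ :=
  ∑ i : (j : Fin S) × Fin (m j), D i' i.1 * ((T i).1 ^ 3 - (T i).2 ^ 3)

/-- Quadratic phase attached to a tuple of solutions. -/
def qud {S : ℕ} (m : Fin S → ℕ) (b : Fin S → ℝ)
    (T : ((j : Fin S) × Fin (m j)) → ℤ × ℤ) : ℝ :=
  ∑ i : (j : Fin S) × Fin (m j), b i.1 * (((T i).1 : ℝ) ^ 2 - ((T i).2 : ℝ) ^ 2)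

lemma norm_fS_sq (P : ℕ) (a c : ℝ) :
    ((‖fS P a c‖ : ℂ)) ^ 2
      = ∑ p ∈ box P, eF (a * (((p.1 : ℝ)) ^ 3 - ((p.2 : ℝ)) ^ 3)
          + c * (((p.1 : ℝ)) ^ 2 - ((p.2 : ℝ)) ^ 2)) := by
  rw [← Complex.mul_conj' (fS P a c)]
  rw [fS, map_sum]
  rw [Finset.sum_mul_sum]
  rw [box, Finset.sum_product]
  refine Finset.sum_congr rfl fun x _ => Finset.sum_congr rfl fun y _ => ?_
  rw [conj_eF, ← eF_add]
  congr 1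
  ring

lemma continuous_fS (P : ℕ) : Continuous (fun p : ℝ × ℝ => fS P p.1 p.2) := by
  unfold fS
  refine continuous_finset_sum _ fun x _ => ?_
  exact continuous_eF.comp (by fun_prop)

lemma norm_fS_le (P : ℕ) (a c : ℝ) : ‖fS P a c‖ ≤ (2 * P + 1 : ℝ) := by
  have h := norm_sum_le (Finset.Icc (-(P:ℤ)) P)
    (fun x : ℤ => eF (a * (x : ℝ) ^ 3 + c * (x : ℝ) ^ 2))
  rw [fS]
  refine h.trans ?_
  have : ∀ x ∈ Finset.Icc (-(P:ℤ)) P,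
      ‖eF (a * (x : ℝ) ^ 3 + c * (x : ℝ) ^ 2)‖ = 1 := fun x _ => norm_eF _
  rw [Finset.sum_congr rfl this, Finset.sum_const, Int.card_Icc]
  have : ((P : ℤ) + 1 - -(P : ℤ)).toNat = 2 * P + 1 := by omega
  rw [this]
  simp only [nsmul_eq_mul, mul_one]
  push_cast
  norm_num

lemma gS_eq_fS (P : ℕ) (a : ℝ) : gS P a = fS P a 0 := by
  unfold gS fS
  simp

/-- Pointwise expansion of the product of even powers of Weyl sums. -/
lemma pointwise_expand (P : ℕ) {R S : ℕ} (D : Matrix (Fin R) (Fin S) ℤ) (m : Fin S → ℕ)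
    (b : Fin S → ℝ) (η : Fin R → ℝ) :
    ((∏ j : Fin S, ‖fS P (∑ i, (D i j : ℝ) * η i) (b j)‖ ^ (2 * m j) : ℝ) : ℂ)
      = ∑ T ∈ Fintype.piFinset (fun _ : (j : Fin S) × Fin (m j) => box P),
          eF (qud m b T) * eF (∑ i' : Fin R, η i' * (cub D m T i' : ℝ)) := by
  push_cast
  have step1 : ∀ j : Fin S,
      ((‖fS P (∑ i, (D i j : ℝ) * η i) (b j)‖ : ℂ)) ^ (2 * m j)
        = ∏ _k : Fin (m j), ∑ p ∈ box P,
            eF ((∑ i, (D i j : ℝ) * η i) * (((p.1 : ℝ)) ^ 3 - ((p.2 : ℝ)) ^ 3)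
              + b j * (((p.1 : ℝ)) ^ 2 - ((p.2 : ℝ)) ^ 2)) := by
    intro j
    rw [pow_mul, norm_fS_sq, Finset.prod_const]
    simp
  calc (∏ j : Fin S, ((‖fS P (∑ i, (D i j : ℝ) * η i) (b j)‖ : ℂ)) ^ (2 * m j))
      = ∏ j : Fin S, ∏ _k : Fin (m j), ∑ p ∈ box P,
            eF ((∑ i, (D i j : ℝ) * η i) * (((p.1 : ℝ)) ^ 3 - ((p.2 : ℝ)) ^ 3)
              + b j * (((p.1 : ℝ)) ^ 2 - ((p.2 : ℝ)) ^ 2)) :=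
        Finset.prod_congr rfl fun j _ => step1 j
    _ = ∏ i : (j : Fin S) × Fin (m j), ∑ p ∈ box P,
            eF ((∑ i', (D i' i.1 : ℝ) * η i') * (((p.1 : ℝ)) ^ 3 - ((p.2 : ℝ)) ^ 3)
              + b i.1 * (((p.1 : ℝ)) ^ 2 - ((p.2 : ℝ)) ^ 2)) := by
        rw [← Finset.univ_sigma_univ, Finset.prod_sigma]
    _ = ∑ T ∈ Fintype.piFinset (fun _ : (j : Fin S) × Fin (m j) => box P),
          ∏ i : (j : Fin S) × Fin (m j),
            eF ((∑ i', (D i' i.1 : ℝ) * η i') * (((T i).1 : ℝ) ^ 3 - ((T i).2 : ℝ) ^ 3)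
              + b i.1 * (((T i).1 : ℝ) ^ 2 - ((T i).2 : ℝ) ^ 2)) := by
        rw [Finset.prod_univ_sum]
    _ = ∑ T ∈ Fintype.piFinset (fun _ : (j : Fin S) × Fin (m j) => box P),
          eF (qud m b T) * eF (∑ i' : Fin R, η i' * (cub D m T i' : ℝ)) := by
        refine Finset.sum_congr rfl fun T _ => ?_
        rw [← eF_sum, ← eF_add]
        congr 1
        rw [Finset.sum_add_distrib, add_comm]
        congr 1
        unfold cub
        push_cast
        simp_rw [Finset.sum_mul, Finset.mul_sum]
        rw [Finset.sum_comm]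
        exact Finset.sum_congr rfl fun i' _ => Finset.sum_congr rfl fun i _ => by ring

end KeyLemma

section IntegralKey

lemma integral_expand (P : ℕ) {R S : ℕ} (D : Matrix (Fin R) (Fin S) ℤ) (m : Fin S → ℕ)
    (b : Fin S → ℝ) :
    ∫ η in unitCube R, ∏ j : Fin S, ‖fS P (∑ i, (D i j : ℝ) * η i) (b j)‖ ^ (2 * m j)
      = ∑ T ∈ Fintype.piFinset (fun _ : (j : Fin S) × Fin (m j) => box P),
          (eF (qud m b T) * ∏ i' : Fin R, (if cub D m T i' = 0 then (1:ℂ) else 0)).re := by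
  have h1 : ∫ η in unitCube R,
        ((∏ j : Fin S, ‖fS P (∑ i, (D i j : ℝ) * η i) (b j)‖ ^ (2 * m j) : ℝ) : ℂ)
      = ∑ T ∈ Fintype.piFinset (fun _ : (j : Fin S) × Fin (m j) => box P),
          eF (qud m b T) * ∏ i' : Fin R, (if cub D m T i' = 0 then (1:ℂ) else 0) := by
    calc ∫ η in unitCube R,
          ((∏ j : Fin S, ‖fS P (∑ i, (D i j : ℝ) * η i) (b j)‖ ^ (2 * m j) : ℝ) : ℂ)
        = ∫ η in unitCube R,
            ∑ T ∈ Fintype.piFinset (fun _ : (j : Fin S) × Fin (m j) => box P),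
              eF (qud m b T) * eF (∑ i' : Fin R, η i' * (cub D m T i' : ℝ)) := by
          exact integral_congr_ae (Filter.Eventually.of_forall fun η => pointwise_expand P D m b η)
      _ = ∑ T ∈ Fintype.piFinset (fun _ : (j : Fin S) × Fin (m j) => box P),
            ∫ η in unitCube R,
              eF (qud m b T) * eF (∑ i' : Fin R, η i' * (cub D m T i' : ℝ)) := by
          refine integral_finset_sum _ fun T _ => ?_
          refine integrableOn_cube ?_
          refine (continuous_const.mul ?_)
          refine continuous_eF.comp ?_
          exact continuous_finset_sum _ fun i' _ => (continuous_apply i').mul continuous_const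
      _ = ∑ T ∈ Fintype.piFinset (fun _ : (j : Fin S) × Fin (m j) => box P),
            eF (qud m b T) * ∏ i' : Fin R, (if cub D m T i' = 0 then (1:ℂ) else 0) := by
          refine Finset.sum_congr rfl fun T _ => ?_
          rw [MeasureTheory.integral_const_mul, integral_cube_eF]
  have h2 : ((∫ η in unitCube R,
      ∏ j : Fin S, ‖fS P (∑ i, (D i j : ℝ) * η i) (b j)‖ ^ (2 * m j) : ℝ) : ℂ)
      = ∑ T ∈ Fintype.piFinset (fun _ : (j : Fin S) × Fin (m j) => box P),
          eF (qud m b T) * ∏ i' : Fin R, (if cub D m T i' = 0 then (1:ℂ) else 0) := by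
    rw [← h1]
    exact integral_ofReal.symm
  have h3 := congrArg Complex.re h2
  rw [Complex.ofReal_re] at h3
  rw [h3, Complex.re_sum]

lemma integral_f_le_integral_g (P : ℕ) {R S : ℕ} (D : Matrix (Fin R) (Fin S) ℤ)
    (m : Fin S → ℕ) (b : Fin S → ℝ) :
    ∫ η in unitCube R, ∏ j : Fin S, ‖fS P (∑ i, (D i j : ℝ) * η i) (b j)‖ ^ (2 * m j)
      ≤ ∫ η in unitCube R, ∏ j : Fin S, ‖gS P (∑ i, (D i j : ℝ) * η i)‖ ^ (2 * m j) := by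
  have hg : (∫ η in unitCube R, ∏ j : Fin S, ‖gS P (∑ i, (D i j : ℝ) * η i)‖ ^ (2 * m j))
      = ∫ η in unitCube R,
          ∏ j : Fin S, ‖fS P (∑ i, (D i j : ℝ) * η i) ((fun _ => (0:ℝ)) j)‖ ^ (2 * m j) := by
    simp_rw [gS_eq_fS]
  rw [hg, integral_expand P D m b, integral_expand P D m (fun _ => (0:ℝ))]
  refine Finset.sum_le_sum fun T _ => ?_
  set c : ℝ := ∏ i' : Fin R, (if cub D m T i' = 0 then (1:ℝ) else 0) with hc
  have hCprod : (∏ i' : Fin R, (if cub D m T i' = 0 then (1:ℂ) else 0)) = (c : ℂ) := by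
    rw [hc, Complex.ofReal_prod]
    exact Finset.prod_congr rfl fun i' _ => by by_cases h : cub D m T i' = 0 <;> simp [h]
  have hcnn : 0 ≤ c := Finset.prod_nonneg fun i' _ => by by_cases h : cub D m T i' = 0 <;> simp [h]
  have hq0 : qud m (fun _ => (0:ℝ)) T = 0 := by simp [qud]
  rw [hCprod, hq0, eF_zero, one_mul, Complex.ofReal_re]
  have hre : (eF (qud m b T) * (c : ℂ)).re = (eF (qud m b T)).re * c := by
    rw [Complex.mul_re]
    simp
  rw [hre]
  have h1 : (eF (qud m b T)).re ≤ 1 := by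
    have h := Complex.re_le_norm (eF (qud m b T))
    rwa [norm_eF] at h
  exact mul_le_of_le_one_left hcnn h1

end IntegralKey

section Assembly

lemma continuous_fS' (P : ℕ) {X : Type*} [TopologicalSpace X] {g h : X → ℝ}
    (hg : Continuous g) (hh : Continuous h) : Continuous (fun x => fS P (g x) (h x)) := by
  unfold fS
  refine continuous_finset_sum _ fun y _ => ?_
  exact continuous_eF.comp (by fun_prop)

lemma continuous_phi' {X : Type*} [TopologicalSpace X] (P : ℕ) {S : ℕ} (E : ℕ → ℕ)
    (g h : Fin S → X → ℝ) (hg : ∀ j, Continuous (g j)) (hh : ∀ j, Continuous (h j)) :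
    Continuous (fun x => ∏ j : Fin S, ‖fS P (g j x) (h j x)‖ ^ (E (j : ℕ))) := by
  refine continuous_finset_prod _ fun j _ => ?_
  exact ((continuous_fS' P (hg j) (hh j)).norm).pow _

/-- The integrand of `JInt` as a function of the pair of variables. -/
noncomputable def Phi (P : ℕ) {R S l' : ℕ} (D3 : Matrix (Fin R) (Fin S) ℤ) (D2 : Matrix (Fin l') (Fin S) ℤ)
    (E : ℕ → ℕ) (q : (Fin R → ℝ) × (Fin l' → ℝ)) : ℝ :=
  ∏ j : Fin S, ‖fS P (∑ i, (D3 i j : ℝ) * q.1 i) (∑ i, (D2 i j : ℝ) * q.2 i)‖ ^ (E (j : ℕ))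

lemma JInt_eq_Phi (P : ℕ) {R S l' : ℕ} (D3 : Matrix (Fin R) (Fin S) ℤ)
    (D2 : Matrix (Fin l') (Fin S) ℤ) (E : ℕ → ℕ) :
    JInt P D3 D2 E
      = ∫ α3 in unitCube R, ∫ α2 in unitCube l', Phi P D3 D2 E (α3, α2) := rfl

lemma Phi_nonneg (P : ℕ) {R S l' : ℕ} (D3 : Matrix (Fin R) (Fin S) ℤ)
    (D2 : Matrix (Fin l') (Fin S) ℤ) (E : ℕ → ℕ) (q : (Fin R → ℝ) × (Fin l' → ℝ)) :
    0 ≤ Phi P D3 D2 E q :=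
  Finset.prod_nonneg fun j _ => pow_nonneg (norm_nonneg _) _

lemma continuous_Phi (P : ℕ) {R S l' : ℕ} (D3 : Matrix (Fin R) (Fin S) ℤ)
    (D2 : Matrix (Fin l') (Fin S) ℤ) (E : ℕ → ℕ) :
    Continuous (Phi P D3 D2 E) := by
  unfold Phi
  exact continuous_phi' P E _ _
    (fun j => continuous_finset_sum _ fun i _ =>
      continuous_const.mul ((continuous_apply i).comp continuous_fst))
    (fun j => continuous_finset_sum _ fun i _ =>
      continuous_const.mul ((continuous_apply i).comp continuous_snd))

lemma continuous_Phi_slice (P : ℕ) {R S l' : ℕ} (D3 : Matrix (Fin R) (Fin S) ℤ)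
    (D2 : Matrix (Fin l') (Fin S) ℤ) (E : ℕ → ℕ) (α3 : Fin R → ℝ) :
    Continuous (fun α2 : Fin l' → ℝ => Phi P D3 D2 E (α3, α2)) := by
  unfold Phi
  exact continuous_phi' P E
    (fun j (_ : Fin l' → ℝ) => ∑ i, (D3 i j : ℝ) * α3 i)
    (fun j α2 => ∑ i, (D2 i j : ℝ) * α2 i)
    (fun j => continuous_const)
    (fun j => continuous_finset_sum _ fun i _ =>
      continuous_const.mul (continuous_apply i))

lemma Phi_le (P : ℕ) {R S l' : ℕ} (D3 : Matrix (Fin R) (Fin S) ℤ)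
    (D2 : Matrix (Fin l') (Fin S) ℤ) (E : ℕ → ℕ) (q : (Fin R → ℝ) × (Fin l' → ℝ)) :
    Phi P D3 D2 E q ≤ ∏ j : Fin S, (2 * (P : ℝ) + 1) ^ (E (j : ℕ)) := by
  refine Finset.prod_le_prod (fun j _ => pow_nonneg (norm_nonneg _) _) fun j _ =>
    pow_le_pow_left₀ (norm_nonneg _) (norm_fS_le P _ _) _

lemma integrable_Phi (P : ℕ) {R S l' : ℕ} (D3 : Matrix (Fin R) (Fin S) ℤ)
    (D2 : Matrix (Fin l') (Fin S) ℤ) (E : ℕ → ℕ) :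
    Integrable (Phi P D3 D2 E)
      (((volume : Measure (Fin R → ℝ)).restrict (unitCube R)).prod
        ((volume : Measure (Fin l' → ℝ)).restrict (unitCube l'))) := by
  haveI := isFiniteMeasure_cube R
  haveI := isFiniteMeasure_cube l'
  refine Integrable.mono' (g := fun _ => ∏ j : Fin S, (2 * (P : ℝ) + 1) ^ (E (j : ℕ)))
    (integrable_const _) (continuous_Phi P D3 D2 E).aestronglyMeasurable ?_
  refine Filter.Eventually.of_forall fun q => ?_
  rw [Real.norm_eq_abs, abs_of_nonneg (Phi_nonneg P D3 D2 E q)]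
  exact Phi_le P D3 D2 E q

end Assembly


/-- For `n ≥ 2`, discarding the quadratic equations and estimating the eighth-power factors
trivially gives `J_n(P) ≪ P^{8l} I(P, D⁽³⁾)`, for any matrix `D⁽²⁾` of format `l × (2ρ+l)`. -/
theorem J_le_pow_mul_I (r l : ℕ) (hl : 0 < l) (hrl : 2 * l ≤ r) (n : ℕ) (hn : 2 ≤ n)
    {R S : ℕ} (D3 : Matrix (Fin R) (Fin S) ℤ) (hD3 : IsAuxiliary r l n r 0 D3)
    (D2 : Matrix (Fin l) (Fin S) ℤ) :
    ∃ C : ℝ, ∀ P : ℕ, 0 < P →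
      JInt P D3 D2 (Jexp r l n) ≤ C * (P : ℝ) ^ (8 * l) * IInt P D3 := by
  obtain ⟨hR, hS, -, -, -, -⟩ := hD3
  refine ⟨(3:ℝ) ^ (8 * l), fun P hP => ?_⟩
  set ρ := n * (r - l) with hρdef
  have hb : (n - 1) * (r - l) + (r - l) = ρ := by
    rw [hρdef]
    conv_rhs => rw [show n = (n - 1) + 1 by omega]
    ring
  have hRρ : R = ρ + l := by omega
  have hρ2 : 2 * l ≤ ρ := by
    calc 2 * l ≤ 2 * (r - l) := by omega
    _ ≤ n * (r - l) := Nat.mul_le_mul_right _ hn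
  have hSval : S = 2 * ρ + l := by omega
  -- exponent bookkeeping
  set δ : ℕ → ℕ := fun j => if j < R then 0 else if j < R + l then 4
    else if j < 2 * ρ then 0 else 4 with hδdef
  set EI : ℕ → ℕ := fun j => if j < R then 2 else 4 with hEIdef
  have hJE : ∀ j : Fin S, Jexp r l n (j : ℕ) = EI (j : ℕ) + δ (j : ℕ) := by
    intro j
    have hj : (j : ℕ) < S := j.2
    simp only [Jexp, hδdef, hEIdef, ← hρdef]
    rw [if_neg (by omega : ¬ n = 1)]
    split_ifs <;> omega
  have hsum : ∑ j : Fin S, δ (j : ℕ) = 8 * l := by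
    rw [Fin.sum_univ_eq_sum_range]
    have h1 : ∀ j ∈ Finset.range S, δ j
        = (if j ∈ Finset.Ico R (R + l) then 4 else 0)
          + (if j ∈ Finset.Ico (2 * ρ) S then 4 else 0) := by
      intro j hj
      rw [Finset.mem_range] at hj
      simp only [hδdef, Finset.mem_Ico]
      split_ifs <;> omega
    rw [Finset.sum_congr rfl h1, Finset.sum_add_distrib,
      Finset.sum_ite_mem, Finset.sum_ite_mem]
    have e1 : Finset.range S ∩ Finset.Ico R (R + l) = Finset.Ico R (R + l) :=
      Finset.inter_eq_right.mpr fun j hj => Finset.mem_range.mpr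
        (by rw [Finset.mem_Ico] at hj; omega)
    have e2 : Finset.range S ∩ Finset.Ico (2 * ρ) S = Finset.Ico (2 * ρ) S :=
      Finset.inter_eq_right.mpr fun j hj => Finset.mem_range.mpr
        (by rw [Finset.mem_Ico] at hj; omega)
    rw [e1, e2, Finset.sum_const, Finset.sum_const, Nat.card_Ico, Nat.card_Ico]
    simp only [smul_eq_mul]
    omega
  -- notation
  set K : ℝ := (2 * (P:ℝ) + 1) ^ (8 * l) with hKdef
  have hK0 : (0:ℝ) ≤ K := by positivity
  -- pointwise bound
  have hpt : ∀ q, Phi P D3 D2 (Jexp r l n) q ≤ K * Phi P D3 D2 EI q := by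
    intro q
    have h1 : Phi P D3 D2 (Jexp r l n) q = Phi P D3 D2 EI q
        * ∏ j : Fin S,
            ‖fS P (∑ i, (D3 i j : ℝ) * q.1 i) (∑ i, (D2 i j : ℝ) * q.2 i)‖ ^ (δ (j:ℕ)) := by
      unfold Phi
      rw [← Finset.prod_mul_distrib]
      exact Finset.prod_congr rfl fun j _ => by rw [hJE j, pow_add]
    rw [h1, mul_comm (Phi P D3 D2 EI q)]
    refine mul_le_mul_of_nonneg_right ?_ (Phi_nonneg P D3 D2 EI q)
    calc (∏ j : Fin S,
          ‖fS P (∑ i, (D3 i j : ℝ) * q.1 i) (∑ i, (D2 i j : ℝ) * q.2 i)‖ ^ (δ (j:ℕ)))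
        ≤ ∏ j : Fin S, (2 * (P:ℝ) + 1) ^ (δ (j:ℕ)) :=
          Finset.prod_le_prod (fun j _ => pow_nonneg (norm_nonneg _) _)
            (fun j _ => pow_le_pow_left₀ (norm_nonneg _) (norm_fS_le P _ _) _)
      _ = (2 * (P:ℝ) + 1) ^ (∑ j : Fin S, δ (j:ℕ)) := Finset.prod_pow_eq_pow_sum _ _ _
      _ = K := by rw [hsum, hKdef]
  -- integrability
  haveI := isFiniteMeasure_cube R
  haveI := isFiniteMeasure_cube l
  have hIntI := integrable_Phi P D3 D2 EI
  -- exponent forms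
  set mI : Fin S → ℕ := fun j => if (j : ℕ) < R then 1 else 2 with hmIdef
  have hEImI : ∀ j : Fin S, EI (j : ℕ) = 2 * mI j := by
    intro j
    simp only [hEIdef, hmIdef]
    split_ifs <;> rfl
  have hIInt : IInt P D3 = ∫ η in unitCube R,
      ∏ j : Fin S, ‖gS P (∑ i, (D3 i j : ℝ) * η i)‖ ^ (2 * mI j) := by
    unfold IInt
    refine integral_congr_ae (Filter.Eventually.of_forall fun η => ?_)
    refine Finset.prod_congr rfl fun j _ => ?_
    rw [show (if (j:ℕ) < R then 2 else 4) = 2 * mI j from by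
      simp only [hmIdef]; split_ifs <;> rfl]
  have hIIntnn : 0 ≤ IInt P D3 :=
    integral_nonneg fun η => Finset.prod_nonneg fun j _ => pow_nonneg (norm_nonneg _) _
  -- the key bound for fixed α2
  have key : ∀ α2 : Fin l → ℝ,
      (∫ α3 in unitCube R, Phi P D3 D2 EI (α3, α2)) ≤ IInt P D3 := by
    intro α2
    have h := integral_f_le_integral_g P D3 mI (fun j => ∑ i, (D2 i j : ℝ) * α2 i)
    rw [hIInt]
    have hl2 : (∫ α3 in unitCube R, Phi P D3 D2 EI (α3, α2))
        = ∫ η in unitCube R, ∏ j : Fin S,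
            ‖fS P (∑ i, (D3 i j : ℝ) * η i) (∑ i, (D2 i j : ℝ) * α2 i)‖ ^ (2 * mI j) := by
      refine integral_congr_ae (Filter.Eventually.of_forall fun η => ?_)
      unfold Phi
      exact Finset.prod_congr rfl fun j _ => by rw [hEImI j]
    rw [hl2]
    exact h
  -- slice integrability
  have hslice : ∀ E : ℕ → ℕ, ∀ α3 : Fin R → ℝ,
      Integrable (fun α2 => Phi P D3 D2 E (α3, α2))
        ((volume : Measure (Fin l → ℝ)).restrict (unitCube l)) :=
    fun E α3 => integrableOn_cube (continuous_Phi_slice P D3 D2 E α3)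
  -- main chain
  have step1 : JInt P D3 D2 (Jexp r l n)
      ≤ ∫ α3 in unitCube R, K * ∫ α2 in unitCube l, Phi P D3 D2 EI (α3, α2) := by
    rw [JInt_eq_Phi]
    refine integral_mono_of_nonneg ?_ ((hIntI.integral_prod_left).const_mul K) ?_
    · exact Filter.Eventually.of_forall fun α3 =>
        integral_nonneg fun α2 => Phi_nonneg P D3 D2 _ _
    · refine Filter.Eventually.of_forall fun α3 => ?_
      have hmono : (∫ α2 in unitCube l, Phi P D3 D2 (Jexp r l n) (α3, α2))
          ≤ ∫ α2 in unitCube l, K * Phi P D3 D2 EI (α3, α2) :=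
        integral_mono_of_nonneg
          (Filter.Eventually.of_forall fun α2 => Phi_nonneg P D3 D2 _ _)
          ((hslice EI α3).const_mul K)
          (Filter.Eventually.of_forall fun α2 => hpt _)
      calc (∫ α2 in unitCube l, Phi P D3 D2 (Jexp r l n) (α3, α2))
          ≤ ∫ α2 in unitCube l, K * Phi P D3 D2 EI (α3, α2) := hmono
        _ = K * ∫ α2 in unitCube l, Phi P D3 D2 EI (α3, α2) := integral_const_mul K _
  have step2 : (∫ α3 in unitCube R, K * ∫ α2 in unitCube l, Phi P D3 D2 EI (α3, α2))
      = K * ∫ α2 in unitCube l, ∫ α3 in unitCube R, Phi P D3 D2 EI (α3, α2) := by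
    rw [integral_const_mul]
    congr 1
    exact integral_integral_swap hIntI
  have step3 : (∫ α2 in unitCube l, ∫ α3 in unitCube R, Phi P D3 D2 EI (α3, α2))
      ≤ IInt P D3 := by
    have hmono : (∫ α2 in unitCube l, ∫ α3 in unitCube R, Phi P D3 D2 EI (α3, α2))
        ≤ ∫ _α2 in unitCube l, IInt P D3 :=
      integral_mono_of_nonneg
        (Filter.Eventually.of_forall fun α2 =>
          integral_nonneg fun α3 => Phi_nonneg P D3 D2 _ _)
        (integrable_const _)
        (Filter.Eventually.of_forall fun α2 => key α2)
    refine hmono.trans ?_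
    rw [integral_const, measureReal_def, Measure.restrict_apply_univ, volume_unitCube]
    simp
  have hKle : K ≤ (3:ℝ) ^ (8 * l) * (P : ℝ) ^ (8 * l) := by
    rw [hKdef, ← mul_pow]
    refine pow_le_pow_left₀ (by positivity) ?_ _
    have h1P : (1:ℝ) ≤ (P:ℝ) := by exact_mod_cast hP
    linarith
  calc JInt P D3 D2 (Jexp r l n)
      ≤ ∫ α3 in unitCube R, K * ∫ α2 in unitCube l, Phi P D3 D2 EI (α3, α2) := step1
    _ = K * ∫ α2 in unitCube l, ∫ α3 in unitCube R, Phi P D3 D2 EI (α3, α2) := step2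
    _ ≤ K * IInt P D3 := mul_le_mul_of_nonneg_left step3 hK0
    _ ≤ (3:ℝ) ^ (8 * l) * (P : ℝ) ^ (8 * l) * IInt P D3 :=
        mul_le_mul_of_nonneg_right hKle hIIntnn
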